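/- arXiv:2305.04866 — 5 statements merged into one kernel-verified Lean document; each statement's English description precedes it below -/
import Mathlib

section
/- Let S be a finite nonempty type with state distribution μ (μ s ≥ 0, ∑_s μ s = 1); for each i ∈ Fin n let A i be a finite nonempty type and π_i : ℝ → S → A i → ℝ a per-dimension parameterized policy (π_i θ s a > 0, ∑_{a ∈ A i} π_i θ s a = 1, θ ↦ π_i θ s a differentiable); let π θ s a = ∏_i π_i θ s (a i) be the product policy on tuples a ∈ Π i, A i. Fix i ∈ Fin n and let g : S → (Π i, A i) → ℝ be a function that does not depend on action dimension i (i.e., g s a = g s a' whenever a and a' agree at every coordinate ≠ i). Then for every θ: ∑_s μ s · ∑_a π θ s a · ((d/dθ) log (π_i θ s (a i))) · g s a = 0. That is, reward terms that an action dimension cannot affect contribute zero in expectation to that dimension's policy gradient. -/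
lemma key_single {A : Type*} [Fintype A]
    (f : ℝ → A → ℝ) (hpos : ∀ θ a, 0 < f θ a) (hsum : ∀ θ, ∑ a, f θ a = 1)
    (hdiff : ∀ a, Differentiable ℝ (fun θ => f θ a)) (θ : ℝ) :
    ∑ b : A, f θ b * deriv (fun θ' => Real.log (f θ' b)) θ = 0 := by
  have h1 : ∀ b : A, f θ b * deriv (fun θ' => Real.log (f θ' b)) θ
      = deriv (fun θ' => f θ' b) θ := by
    intro b
    have hb := (hdiff b θ).hasDerivAt
    have hlog := hb.log (ne_of_gt (hpos θ b))
    rw [hlog.deriv]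
    field_simp
    exact mul_div_cancel_left₀ _ (ne_of_gt (hpos θ b))
  rw [Finset.sum_congr rfl (fun b _ => h1 b)]
  have h2 : HasDerivAt (fun θ' => ∑ b : A, f θ' b)
      (∑ b : A, deriv (fun θ' => f θ' b) θ) θ :=
    HasDerivAt.fun_sum (fun b _ => (hdiff b θ).hasDerivAt)
  have h3 : (fun θ' => ∑ b : A, f θ' b) = fun _ => (1 : ℝ) := by
    funext θ'; exact hsum θ'
  rw [h3] at h2
  exact h2.unique (hasDerivAt_const θ 1)

/-- Reward terms that an action dimension cannot affect contribute zero in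
expectation to that dimension's policy gradient. -/
theorem irrelevant_reward_zero_contribution {n : ℕ} {S : Type*}
    [Fintype S] [Nonempty S]
    {A : Fin n → Type*} [∀ i, Fintype (A i)] [∀ i, Nonempty (A i)]
    (μ : S → ℝ)
    (hμ : ∀ s, 0 ≤ μ s)
    (hμsum : ∑ s, μ s = 1)
    (πi : (i : Fin n) → ℝ → S → A i → ℝ)
    (hpos : ∀ i θ s a, 0 < πi i θ s a)
    (hsum : ∀ i θ s, ∑ a, πi i θ s a = 1)
    (hdiff : ∀ i s a, Differentiable ℝ (fun θ => πi i θ s a))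
    (i : Fin n)
    (g : S → (∀ k, A k) → ℝ)
    (hg : ∀ s (a a' : ∀ k, A k), (∀ k, k ≠ i → a k = a' k) → g s a = g s a') :
    ∀ θ : ℝ,
      ∑ s, μ s * ∑ a : ∀ k, A k,
        (∏ k, πi k θ s (a k)) * deriv (fun θ' => Real.log (πi i θ' s (a i))) θ * g s a
        = 0 := by
  intro θ
  have hinner : ∀ s, ∑ a : ∀ k, A k,
      (∏ k, πi k θ s (a k)) * deriv (fun θ' => Real.log (πi i θ' s (a i))) θ * g s a
      = 0 := by
    intro s
    rw [← Equiv.sum_comp (Equiv.piSplitAt i A).symm]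
    rw [Fintype.sum_prod_type]
    rw [Finset.sum_comm]
    apply Finset.sum_eq_zero
    intro c _
    set b₀ : A i := Classical.arbitrary (A i) with hb₀
    have hcoord : ∀ b (k : Fin n) (h : k ≠ i),
        (Equiv.piSplitAt i A).symm (b, c) k = c ⟨k, h⟩ := by
      intro b k h
      simp [Equiv.piSplitAt, dif_neg h]
    have hi : ∀ b, (Equiv.piSplitAt i A).symm (b, c) i = b := by
      intro b; simp [Equiv.piSplitAt]
    have hgc : ∀ b, g s ((Equiv.piSplitAt i A).symm (b, c))
        = g s ((Equiv.piSplitAt i A).symm (b₀, c)) := by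
      intro b; apply hg; intro k h; rw [hcoord b k h, hcoord b₀ k h]
    have hprod : ∀ b, (∏ k, πi k θ s ((Equiv.piSplitAt i A).symm (b, c) k))
        = πi i θ s b *
          ∏ k ∈ {i}ᶜ, πi k θ s ((Equiv.piSplitAt i A).symm (b₀, c) k) := by
      intro b
      rw [Fintype.prod_eq_mul_prod_compl i, hi]
      congr 1
      apply Finset.prod_congr rfl
      intro k hk
      have h : k ≠ i := by simpa using hk
      rw [hcoord b k h, hcoord b₀ k h]
    have step : ∀ b,
        (∏ k, πi k θ s ((Equiv.piSplitAt i A).symm (b, c) k)) *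
          deriv (fun θ' => Real.log (πi i θ' s ((Equiv.piSplitAt i A).symm (b, c) i))) θ *
          g s ((Equiv.piSplitAt i A).symm (b, c))
        = (πi i θ s b * deriv (fun θ' => Real.log (πi i θ' s b)) θ) *
          ((∏ k ∈ {i}ᶜ, πi k θ s ((Equiv.piSplitAt i A).symm (b₀, c) k)) *
            g s ((Equiv.piSplitAt i A).symm (b₀, c))) := by
      intro b
      rw [hprod b, hi b, hgc b]
      ring
    rw [Finset.sum_congr rfl (fun b _ => step b), ← Finset.sum_mul,
      key_single (fun θ' b => πi i θ' s b) (fun θ' b => hpos i θ' s b)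
        (fun θ' => hsum i θ' s) (fun b => hdiff i s b) θ]
    ring
  calc ∑ s, μ s * ∑ a : ∀ k, A k,
        (∏ k, πi k θ s (a k)) * deriv (fun θ' => Real.log (πi i θ' s (a i))) θ * g s a
      = ∑ s, μ s * 0 := Finset.sum_congr rfl (fun s _ => by rw [hinner s])
    _ = 0 := by simp
end

section
/- (Causal policy gradient is unbiased; discrete one-step form of Theorem 2.) Let S be a finite nonempty type with state distribution μ; for each i ∈ Fin n let A i be a finite nonempty type and π_i : ℝ → S → A i → ℝ a per-dimension parameterized policy (π_i θ s a > 0, ∑_{a ∈ A i} π_i θ s a = 1, θ ↦ π_i θ s a differentiable); let π θ s a = ∏_i π_i θ s (a i) be the product policy. Let r : Fin m → S → (Π i, A i) → ℝ be reward terms and let B : Fin n → Fin m → Bool be a correct causal matrix, i.e., B i j = false implies r j does not depend on action dimension i. Then for every θ: ∑_s μ s · ∑_a π θ s a · ∑_{i ∈ Fin n} ((d/dθ) log (π_i θ s (a i))) · (∑_{j : B i j = true} r j s a) = (d/dθ) (∑_s μ s · ∑_a π θ s a · ∑_{j ∈ Fin m} r j s a). -/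
open Finset

lemma sum_pi_mul_eq_zero {n : ℕ} {A : Fin n → Type*} [∀ i, Fintype (A i)]
    [∀ i, Nonempty (A i)]
    (i : Fin n) (G : A i → ℝ) (H : (∀ k, A k) → ℝ)
    (hG : ∑ x, G x = 0)
    (hH : ∀ (a a' : ∀ k, A k), (∀ k, k ≠ i → a k = a' k) → H a = H a') :
    ∑ a : ∀ k, A k, G (a i) * H a = 0 := by
  classical
  set e := Equiv.piSplitAt i A with he
  rw [← Equiv.sum_comp e.symm (fun a => G (a i) * H a)]
  rw [Fintype.sum_prod_type]
  have happ : ∀ (x : A i) (q : ∀ j : {j // j ≠ i}, A j), e.symm (x, q) i = x := by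
    intro x q
    simp [he, Equiv.piSplitAt]
  have hind : ∀ (x x' : A i) (q : ∀ j : {j // j ≠ i}, A j),
      H (e.symm (x, q)) = H (e.symm (x', q)) := by
    intro x x' q
    apply hH
    intro k hk
    simp [he, Equiv.piSplitAt, dif_neg hk]
  obtain ⟨x₀⟩ := (inferInstance : Nonempty (A i))
  calc ∑ x : A i, ∑ q, G (e.symm (x, q) i) * H (e.symm (x, q))
      = ∑ x : A i, ∑ q, G x * H (e.symm (x₀, q)) := by
        refine Finset.sum_congr rfl fun x _ => Finset.sum_congr rfl fun q _ => ?_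
        rw [happ, hind x x₀]
    _ = 0 := by
        rw [Finset.sum_comm]
        simp [← Finset.sum_mul, hG]

/-- Causal policy gradient is an unbiased estimator of the true policy
gradient (discrete one-step form of Theorem 2). -/
theorem causal_policy_gradient_unbiased {n m : ℕ} {S : Type*}
    [Fintype S] [Nonempty S]
    {A : Fin n → Type*} [∀ i, Fintype (A i)] [∀ i, Nonempty (A i)]
    (μ : S → ℝ)
    (hμ : ∀ s, 0 ≤ μ s)
    (hμsum : ∑ s, μ s = 1)
    (πi : (i : Fin n) → ℝ → S → A i → ℝ)
    (hpos : ∀ i θ s a, 0 < πi i θ s a)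
    (hsum : ∀ i θ s, ∑ a, πi i θ s a = 1)
    (hdiff : ∀ i s a, Differentiable ℝ (fun θ => πi i θ s a))
    (r : Fin m → S → (∀ k, A k) → ℝ)
    (B : Fin n → Fin m → Bool)
    (hB : ∀ i j, B i j = false →
      ∀ s (a a' : ∀ k, A k), (∀ k, k ≠ i → a k = a' k) → r j s a = r j s a') :
    ∀ θ : ℝ,
      ∑ s, μ s * ∑ a : ∀ k, A k, (∏ k, πi k θ s (a k)) *
          ∑ i, deriv (fun θ' => Real.log (πi i θ' s (a i))) θ *
            (∑ j ∈ Finset.univ.filter (fun j => B i j = true), r j s a)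
        = deriv (fun θ' =>
            ∑ s, μ s * ∑ a : ∀ k, A k, (∏ k, πi k θ' s (a k)) * ∑ j, r j s a) θ := by
  classical
  intro θ
  -- notation
  set D : (i : Fin n) → S → A i → ℝ := fun i s x => deriv (fun θ' => πi i θ' s x) θ with hD
  -- sum of derivatives over actions is zero
  have hDsum : ∀ i s, ∑ x, D i s x = 0 := by
    intro i s
    have h1 : HasDerivAt (fun θ' => ∑ x, πi i θ' s x) (∑ x, D i s x) θ :=
      HasDerivAt.fun_sum fun x _ => ((hdiff i s x) θ).hasDerivAt
    have h2 : (fun θ' => ∑ x, πi i θ' s x) = fun _ => (1 : ℝ) := by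
      funext θ'; exact hsum i θ' s
    rw [h2] at h1
    exact h1.unique (hasDerivAt_const θ 1)
  -- derivative of the product policy
  have hprod : ∀ s (a : ∀ k, A k), HasDerivAt (fun θ' => ∏ k, πi k θ' s (a k))
      (∑ i, (∏ k ∈ univ.erase i, πi k θ s (a k)) * D i s (a i)) θ := by
    intro s a
    have := HasDerivAt.fun_finsetProd (u := univ) (f := fun k θ' => πi k θ' s (a k))
      (f' := fun i => D i s (a i)) (x := θ) (fun i _ => ((hdiff i s (a i)) θ).hasDerivAt)
    simpa [smul_eq_mul] using this
  -- derivative of the objective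
  have hfull : HasDerivAt (fun θ' => ∑ s, μ s * ∑ a : ∀ k, A k,
        (∏ k, πi k θ' s (a k)) * ∑ j, r j s a)
      (∑ s, μ s * ∑ a : ∀ k, A k,
        (∑ i, (∏ k ∈ univ.erase i, πi k θ s (a k)) * D i s (a i)) * ∑ j, r j s a) θ :=
    HasDerivAt.fun_sum fun s _ =>
      HasDerivAt.const_mul (μ s) (HasDerivAt.fun_sum fun a _ => (hprod s a).mul_const _)
  rw [hfull.deriv]
  refine Finset.sum_congr rfl fun s _ => ?_
  congr 1
  -- rewrite log derivatives
  have hlog : ∀ (i : Fin n) (a : ∀ k, A k),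
      deriv (fun θ' => Real.log (πi i θ' s (a i))) θ = D i s (a i) / πi i θ s (a i) := by
    intro i a
    exact (((hdiff i s (a i)) θ).hasDerivAt.log (ne_of_gt (hpos i θ s (a i)))).deriv
  -- per-state identity
  have step1 : ∀ a : ∀ k, A k, (∏ k, πi k θ s (a k)) *
      ∑ i, deriv (fun θ' => Real.log (πi i θ' s (a i))) θ *
        (∑ j ∈ univ.filter (fun j => B i j = true), r j s a)
      = ∑ i, (∏ k ∈ univ.erase i, πi k θ s (a k)) * D i s (a i) *
          (∑ j ∈ univ.filter (fun j => B i j = true), r j s a) := by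
    intro a
    rw [Finset.mul_sum]
    refine Finset.sum_congr rfl fun i _ => ?_
    rw [hlog i a, ← Finset.prod_erase_mul univ _ (Finset.mem_univ i)]
    have hne : πi i θ s (a i) ≠ 0 := ne_of_gt (hpos i θ s (a i))
    field_simp
  rw [Finset.sum_congr rfl fun a _ => step1 a]
  have step2 : ∀ a : ∀ k, A k,
      (∑ i, (∏ k ∈ univ.erase i, πi k θ s (a k)) * D i s (a i)) * ∑ j, r j s a
      = ∑ i, (∏ k ∈ univ.erase i, πi k θ s (a k)) * D i s (a i) * ∑ j, r j s a := by
    intro a; rw [Finset.sum_mul]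
  rw [Finset.sum_congr rfl fun a _ => step2 a]
  rw [Finset.sum_comm]
  conv_rhs => rw [Finset.sum_comm]
  refine Finset.sum_congr rfl fun i _ => ?_
  -- it remains to show the extra (non-causal) terms vanish
  have hsplit : ∀ a : ∀ k, A k, (∑ j, r j s a) =
      (∑ j ∈ univ.filter (fun j => B i j = true), r j s a)
      + ∑ j ∈ univ.filter (fun j => ¬ (B i j = true)), r j s a :=
    fun a => (Finset.sum_filter_add_sum_filter_not univ _ _).symm
  have hzero : ∑ a : ∀ k, A k, D i s (a i) *
      ((∏ k ∈ univ.erase i, πi k θ s (a k)) *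
        ∑ j ∈ univ.filter (fun j => ¬ (B i j = true)), r j s a) = 0 := by
    refine sum_pi_mul_eq_zero i (D i s) _ (hDsum i s) ?_
    intro a a' hagree
    have hprodeq : (∏ k ∈ univ.erase i, πi k θ s (a k))
        = ∏ k ∈ univ.erase i, πi k θ s (a' k) := by
      refine Finset.prod_congr rfl fun k hk => ?_
      rw [hagree k (Finset.ne_of_mem_erase hk)]
    have hreq : ∀ j ∈ univ.filter (fun j => ¬ (B i j = true)), r j s a = r j s a' := by
      intro j hj
      have hjb : B i j = false := by
        simpa using (Finset.mem_filter.mp hj).2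
      exact hB i j hjb s a a' hagree
    rw [hprodeq, Finset.sum_congr rfl hreq]
  calc ∑ a : ∀ k, A k, (∏ k ∈ univ.erase i, πi k θ s (a k)) * D i s (a i) *
        (∑ j ∈ univ.filter (fun j => B i j = true), r j s a)
      = ∑ a : ∀ k, A k, ((∏ k ∈ univ.erase i, πi k θ s (a k)) * D i s (a i) *
          (∑ j ∈ univ.filter (fun j => B i j = true), r j s a)
        + D i s (a i) * ((∏ k ∈ univ.erase i, πi k θ s (a k)) *
          ∑ j ∈ univ.filter (fun j => ¬ (B i j = true)), r j s a)) := by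
        rw [Finset.sum_add_distrib, hzero, add_zero]
    _ = ∑ a : ∀ k, A k, (∏ k ∈ univ.erase i, πi k θ s (a k)) * D i s (a i) * ∑ j, r j s a := by
        refine Finset.sum_congr rfl fun a _ => ?_
        rw [hsplit a]
        ring
end

section
/- (Factored policy gradient with multipliers; discrete one-step form of Proposition 1.) Let S be a finite nonempty type with state distribution μ; for each i ∈ Fin n let A i be a finite nonempty type and π_i : ℝ → S → A i → ℝ a per-dimension parameterized policy (π_i θ s a > 0, ∑_{a ∈ A i} π_i θ s a = 1, θ ↦ π_i θ s a differentiable); let π θ s a = ∏_i π_i θ s (a i). Let Ψ : Fin m → S → (Π i, A i) → ℝ be target functions, λ : Fin m → ℝ a vector of multipliers, and K : Fin n → Fin m → Bool a correct causal matrix, i.e., K i j = false implies Ψ j does not depend on action dimension i. Then for every θ: ∑_s μ s · ∑_a π θ s a · ∑_{i ∈ Fin n} ((d/dθ) log (π_i θ s (a i))) · (∑_{j : K i j = true} λ j · Ψ j s a) = (d/dθ) (∑_s μ s · ∑_a π θ s a · ∑_{j ∈ Fin m} λ j · Ψ j s a). -/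
lemma aux_zero {n : ℕ} {A : Fin n → Type*} [∀ i, Fintype (A i)] [∀ i, Nonempty (A i)]
    (i : Fin n) (q : A i → ℝ) (hq : ∑ b, q b = 0)
    (r : (∀ k, A k) → ℝ)
    (hr : ∀ a a' : ∀ k, A k, (∀ k, k ≠ i → a k = a' k) → r a = r a') :
    ∑ a : ∀ k, A k, q (a i) * r a = 0 := by
  classical
  let e := Equiv.piSplitAt i A
  have h1 : ∑ a : ∀ k, A k, q (a i) * r a
      = ∑ p : A i × ∀ j : {j // j ≠ i}, A j, q ((e.symm p) i) * r (e.symm p) :=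
    (Equiv.sum_comp e.symm fun a => q (a i) * r a).symm
  rw [h1, Fintype.sum_prod_type]
  have hsym : ∀ (b : A i) (g : ∀ j : {j // j ≠ i}, A j), (e.symm (b, g)) i = b := by
    intro b g; simp [e, Equiv.piSplitAt]
  obtain ⟨b₀⟩ : Nonempty (A i) := inferInstance
  have hrind : ∀ b g, r (e.symm (b, g)) = r (e.symm (b₀, g)) := by
    intro b g
    apply hr
    intro k hk
    simp [e, Equiv.piSplitAt, hk]
  calc ∑ b, ∑ g, q ((e.symm (b,g)) i) * r (e.symm (b,g))
      = ∑ b, q b * ∑ g, r (e.symm (b₀, g)) := by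
        refine Finset.sum_congr rfl fun b _ => ?_
        rw [Finset.mul_sum]
        exact Finset.sum_congr rfl fun g _ => by rw [hsym, hrind]
    _ = 0 := by rw [← Finset.sum_mul, hq, zero_mul]

/-- Factored policy gradient with multipliers is an unbiased estimator of the
gradient of the λ-weighted objective (discrete one-step form of Prop. 1). -/
theorem factored_policy_gradient_unbiased {n m : ℕ} {S : Type*}
    [Fintype S] [Nonempty S]
    {A : Fin n → Type*} [∀ i, Fintype (A i)] [∀ i, Nonempty (A i)]
    (μ : S → ℝ)
    (hμ : ∀ s, 0 ≤ μ s)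
    (hμsum : ∑ s, μ s = 1)
    (πi : (i : Fin n) → ℝ → S → A i → ℝ)
    (hpos : ∀ i θ s a, 0 < πi i θ s a)
    (hsum : ∀ i θ s, ∑ a, πi i θ s a = 1)
    (hdiff : ∀ i s a, Differentiable ℝ (fun θ => πi i θ s a))
    (Ψ : Fin m → S → (∀ k, A k) → ℝ)
    (lam : Fin m → ℝ)
    (K : Fin n → Fin m → Bool)
    (hK : ∀ i j, K i j = false →
      ∀ s (a a' : ∀ k, A k), (∀ k, k ≠ i → a k = a' k) → Ψ j s a = Ψ j s a') :
    ∀ θ : ℝ,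
      ∑ s, μ s * ∑ a : ∀ k, A k, (∏ k, πi k θ s (a k)) *
          ∑ i, deriv (fun θ' => Real.log (πi i θ' s (a i))) θ *
            (∑ j ∈ Finset.univ.filter (fun j => K i j = true), lam j * Ψ j s a)
        = deriv (fun θ' =>
            ∑ s, μ s * ∑ a : ∀ k, A k, (∏ k, πi k θ' s (a k)) *
              ∑ j, lam j * Ψ j s a) θ := by
  classical
  intro θ
  -- notation
  set d : (i : Fin n) → S → A i → ℝ :=
    fun i s b => deriv (fun θ' => πi i θ' s b) θ with hd
  -- derivative of the product
  have hprod : ∀ (s : S) (a : ∀ k, A k),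
      HasDerivAt (fun θ' => ∏ k, πi k θ' s (a k))
        (∑ i, (∏ k ∈ Finset.univ.erase i, πi k θ s (a k)) * d i s (a i)) θ := by
    intro s a
    have := HasDerivAt.fun_finsetProd (u := Finset.univ)
      (f := fun k θ' => πi k θ' s (a k)) (f' := fun k => d k s (a k)) (x := θ)
      (fun k _ => (hdiff k s (a k) θ).hasDerivAt)
    simpa [smul_eq_mul] using this
  -- derivative of the whole objective
  have hbig : HasDerivAt (fun θ' =>
      ∑ s, μ s * ∑ a : ∀ k, A k, (∏ k, πi k θ' s (a k)) * ∑ j, lam j * Ψ j s a)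
      (∑ s, μ s * ∑ a : ∀ k, A k,
        (∑ i, (∏ k ∈ Finset.univ.erase i, πi k θ s (a k)) * d i s (a i)) *
          ∑ j, lam j * Ψ j s a) θ :=
    HasDerivAt.fun_sum fun s _ =>
      ((HasDerivAt.fun_sum fun a _ =>
        (hprod s a).mul_const (∑ j, lam j * Ψ j s a)).const_mul (μ s))
  rw [hbig.deriv]
  refine Finset.sum_congr rfl fun s _ => ?_
  congr 1
  -- per-state identity
  have hlog : ∀ (i : Fin n) (b : A i),
      deriv (fun θ' => Real.log (πi i θ' s b)) θ = d i s b / πi i θ s b := by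
    intro i b
    exact (((hdiff i s b θ).hasDerivAt).log (hpos i θ s b).ne').deriv
  have hdsum : ∀ i : Fin n, ∑ b, d i s b = 0 := by
    intro i
    have h1 : HasDerivAt (fun θ' => ∑ b, πi i θ' s b) (∑ b, d i s b) θ :=
      HasDerivAt.fun_sum fun b _ => (hdiff i s b θ).hasDerivAt
    have h2 : HasDerivAt (fun _ : ℝ => (1 : ℝ)) (0 : ℝ) θ := hasDerivAt_const θ 1
    have heq : (fun θ' => ∑ b, πi i θ' s b) = fun _ : ℝ => (1 : ℝ) := by
      funext θ'; exact hsum i θ' s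
    rw [heq] at h1
    exact h1.unique h2
  -- key vanishing lemma
  have key : ∀ (i : Fin n) (j : Fin m), K i j = false →
      ∑ a : ∀ k, A k, d i s (a i) *
        ((∏ k ∈ Finset.univ.erase i, πi k θ s (a k)) * Ψ j s a) = 0 := by
    intro i j hij
    apply aux_zero i (fun b => d i s b) (hdsum i)
    intro a a' hagree
    have hΨ : Ψ j s a = Ψ j s a' := hK i j hij s a a' hagree
    have hP : (∏ k ∈ Finset.univ.erase i, πi k θ s (a k))
        = ∏ k ∈ Finset.univ.erase i, πi k θ s (a' k) := by
      refine Finset.prod_congr rfl fun k hk => ?_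
      rw [hagree k (Finset.ne_of_mem_erase hk)]
    rw [hΨ, hP]
  -- both sides as double sums over i
  have L : (∑ a : ∀ k, A k, (∏ k, πi k θ s (a k)) *
        ∑ i, deriv (fun θ' => Real.log (πi i θ' s (a i))) θ *
          (∑ j ∈ Finset.univ.filter (fun j => K i j = true), lam j * Ψ j s a))
      = ∑ i, ∑ a : ∀ k, A k, d i s (a i) *
          ((∏ k ∈ Finset.univ.erase i, πi k θ s (a k)) *
            (∑ j ∈ Finset.univ.filter (fun j => K i j = true), lam j * Ψ j s a)) := by
    rw [show (∑ a : ∀ k, A k, (∏ k, πi k θ s (a k)) *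
        ∑ i, deriv (fun θ' => Real.log (πi i θ' s (a i))) θ *
          (∑ j ∈ Finset.univ.filter (fun j => K i j = true), lam j * Ψ j s a))
      = ∑ a : ∀ k, A k, ∑ i, (∏ k, πi k θ s (a k)) *
          (deriv (fun θ' => Real.log (πi i θ' s (a i))) θ *
            (∑ j ∈ Finset.univ.filter (fun j => K i j = true), lam j * Ψ j s a))
      from Finset.sum_congr rfl fun a _ => Finset.mul_sum _ _ _]
    rw [Finset.sum_comm]
    refine Finset.sum_congr rfl fun i _ => Finset.sum_congr rfl fun a _ => ?_
    rw [hlog, ← Finset.mul_prod_erase Finset.univ _ (Finset.mem_univ i)]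
    have hpi : πi i θ s (a i) ≠ 0 := (hpos i θ s (a i)).ne'
    calc (πi i θ s (a i) * ∏ k ∈ Finset.univ.erase i, πi k θ s (a k)) *
          (d i s (a i) / πi i θ s (a i) *
            ∑ j ∈ Finset.univ.filter (fun j => K i j = true), lam j * Ψ j s a)
        = (d i s (a i) / πi i θ s (a i) * πi i θ s (a i)) *
            ((∏ k ∈ Finset.univ.erase i, πi k θ s (a k)) *
              ∑ j ∈ Finset.univ.filter (fun j => K i j = true), lam j * Ψ j s a) := by
          ring
      _ = d i s (a i) *
            ((∏ k ∈ Finset.univ.erase i, πi k θ s (a k)) *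
              ∑ j ∈ Finset.univ.filter (fun j => K i j = true), lam j * Ψ j s a) := by
          rw [div_mul_cancel₀ _ hpi]
  have R : (∑ a : ∀ k, A k,
        (∑ i, (∏ k ∈ Finset.univ.erase i, πi k θ s (a k)) * d i s (a i)) *
          ∑ j, lam j * Ψ j s a)
      = ∑ i, ∑ a : ∀ k, A k,
          ((∏ k ∈ Finset.univ.erase i, πi k θ s (a k)) * d i s (a i)) *
            ∑ j, lam j * Ψ j s a := by
    rw [show (∑ a : ∀ k, A k,
        (∑ i, (∏ k ∈ Finset.univ.erase i, πi k θ s (a k)) * d i s (a i)) *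
          ∑ j, lam j * Ψ j s a)
      = ∑ a : ∀ k, A k, ∑ i,
          ((∏ k ∈ Finset.univ.erase i, πi k θ s (a k)) * d i s (a i)) *
            ∑ j, lam j * Ψ j s a
      from Finset.sum_congr rfl fun a _ => Finset.sum_mul _ _ _]
    rw [Finset.sum_comm]
  rw [L, R]
  refine Finset.sum_congr rfl fun i _ => ?_
  -- split the j-sum into K-true and K-false parts
  have hsplit : ∀ a : ∀ k, A k, (∑ j, lam j * Ψ j s a)
      = (∑ j ∈ Finset.univ.filter (fun j => K i j = true), lam j * Ψ j s a)
        + ∑ j ∈ Finset.univ.filter (fun j => ¬ K i j = true), lam j * Ψ j s a :=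
    fun a => (Finset.sum_filter_add_sum_filter_not _ _ _).symm
  have hzero : ∑ a : ∀ k, A k,
      ((∏ k ∈ Finset.univ.erase i, πi k θ s (a k)) * d i s (a i)) *
        ∑ j ∈ Finset.univ.filter (fun j => ¬ K i j = true), lam j * Ψ j s a = 0 := by
    simp only [Finset.mul_sum]
    rw [Finset.sum_comm]
    refine Finset.sum_eq_zero fun j hj => ?_
    have hij : K i j = false := by
      simpa using (Finset.mem_filter.mp hj).2
    have h0 := key i j hij
    calc ∑ a : ∀ k, A k,
          ((∏ k ∈ Finset.univ.erase i, πi k θ s (a k)) * d i s (a i)) *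
            (lam j * Ψ j s a)
        = lam j * ∑ a : ∀ k, A k, d i s (a i) *
            ((∏ k ∈ Finset.univ.erase i, πi k θ s (a k)) * Ψ j s a) := by
          rw [Finset.mul_sum]
          exact Finset.sum_congr rfl fun a _ => by ring
      _ = 0 := by rw [h0, mul_zero]
  calc ∑ a : ∀ k, A k, d i s (a i) *
        ((∏ k ∈ Finset.univ.erase i, πi k θ s (a k)) *
          (∑ j ∈ Finset.univ.filter (fun j => K i j = true), lam j * Ψ j s a))
      = (∑ a : ∀ k, A k,
          ((∏ k ∈ Finset.univ.erase i, πi k θ s (a k)) * d i s (a i)) *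
            (∑ j ∈ Finset.univ.filter (fun j => K i j = true), lam j * Ψ j s a))
        + ∑ a : ∀ k, A k,
          ((∏ k ∈ Finset.univ.erase i, πi k θ s (a k)) * d i s (a i)) *
            ∑ j ∈ Finset.univ.filter (fun j => ¬ K i j = true), lam j * Ψ j s a := by
        rw [hzero, add_zero]
        exact Finset.sum_congr rfl fun a _ => by ring
    _ = ∑ a : ∀ k, A k,
          ((∏ k ∈ Finset.univ.erase i, πi k θ s (a k)) * d i s (a i)) *
            ∑ j, lam j * Ψ j s a := by
        rw [← Finset.sum_add_distrib]
        exact Finset.sum_congr rfl fun a _ => by rw [hsplit a, mul_add]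
end

section
/- (Causal policy gradient with per-reward-channel state baselines is unbiased.) Let S be a finite nonempty type with state distribution μ; for each i ∈ Fin n let A i be a finite nonempty type and π_i : ℝ → S → A i → ℝ a per-dimension parameterized policy (π_i θ s a > 0, ∑_{a ∈ A i} π_i θ s a = 1, θ ↦ π_i θ s a differentiable); let π θ s a = ∏_i π_i θ s (a i). Let r : Fin m → S → (Π i, A i) → ℝ be reward terms, B : Fin n → Fin m → Bool a correct causal matrix (B i j = false implies r j does not depend on action dimension i), and V : Fin m → S → ℝ arbitrary per-channel state-dependent baselines. Then for every θ: ∑_s μ s · ∑_a π θ s a · ∑_{i ∈ Fin n} ((d/dθ) log (π_i θ s (a i))) · (∑_{j : B i j = true} (r j s a − V j s)) = (d/dθ) (∑_s μ s · ∑_a π θ s a · ∑_{j ∈ Fin m} r j s a). -/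
open Finset

/-- If `g` does not depend on coordinate `i` and `∑ b, q b = 0`, then the weighted
sum vanishes. -/
private lemma sum_prod_indep_zero {n : ℕ} {A : Fin n → Type*} [∀ k, Fintype (A k)]
    [∀ k, Nonempty (A k)]
    (i : Fin n) (q : A i → ℝ) (p : (k : Fin n) → A k → ℝ)
    (hq : ∑ b, q b = 0)
    (g : (∀ k, A k) → ℝ)
    (hg : ∀ a a' : ∀ k, A k, (∀ k, k ≠ i → a k = a' k) → g a = g a') :
    ∑ a : ∀ k, A k, (q (a i) * ∏ k ∈ Finset.univ.erase i, p k (a k)) * g a = 0 := by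
  classical
  set e := Equiv.piSplitAt i A with he
  have hcomp := Equiv.sum_comp e.symm
    (fun a => (q (a i) * ∏ k ∈ Finset.univ.erase i, p k (a k)) * g a)
  rw [← hcomp, Fintype.sum_prod_type, Finset.sum_comm]
  apply Finset.sum_eq_zero
  intro c _
  have hi : ∀ b : A i, e.symm (b, c) i = b := by
    intro b; simp [he, Equiv.piSplitAt]
  have hk : ∀ (b : A i) (k : Fin n) (h : k ≠ i), e.symm (b, c) k = c ⟨k, h⟩ := by
    intro b k h; simp [he, Equiv.piSplitAt, dif_neg h]
  obtain ⟨b₀⟩ := ‹∀ k, Nonempty (A k)› i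
  have key : ∀ b : A i,
      (q ((e.symm (b, c)) i) * ∏ k ∈ Finset.univ.erase i, p k ((e.symm (b, c)) k)) *
        g (e.symm (b, c))
      = q b * ((∏ k ∈ Finset.univ.erase i, p k ((e.symm (b₀, c)) k)) *
        g (e.symm (b₀, c))) := by
    intro b
    have h1 : (∏ k ∈ Finset.univ.erase i, p k ((e.symm (b, c)) k)) =
        ∏ k ∈ Finset.univ.erase i, p k ((e.symm (b₀, c)) k) := by
      apply Finset.prod_congr rfl
      intro k hkmem
      have hne : k ≠ i := Finset.ne_of_mem_erase hkmem
      rw [hk b k hne, hk b₀ k hne]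
    have h2 : g (e.symm (b, c)) = g (e.symm (b₀, c)) := by
      apply hg
      intro k hne
      rw [hk b k hne, hk b₀ k hne]
    rw [hi, h1, h2, mul_assoc]
  calc ∑ b : A i, (q ((e.symm (b, c)) i) *
          ∏ k ∈ Finset.univ.erase i, p k ((e.symm (b, c)) k)) * g (e.symm (b, c))
      = ∑ b : A i, q b * ((∏ k ∈ Finset.univ.erase i, p k ((e.symm (b₀, c)) k)) *
          g (e.symm (b₀, c))) := Finset.sum_congr rfl (fun b _ => key b)
    _ = (∑ b : A i, q b) * _ := by rw [Finset.sum_mul]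
    _ = 0 := by rw [hq, zero_mul]

/-- Causal policy gradient with per-reward-channel state-dependent baselines
is an unbiased estimator of the true policy gradient. -/
theorem causal_policy_gradient_baseline_unbiased {n m : ℕ} {S : Type*}
    [Fintype S] [Nonempty S]
    {A : Fin n → Type*} [∀ i, Fintype (A i)] [∀ i, Nonempty (A i)]
    (μ : S → ℝ)
    (hμ : ∀ s, 0 ≤ μ s)
    (hμsum : ∑ s, μ s = 1)
    (πi : (i : Fin n) → ℝ → S → A i → ℝ)
    (hpos : ∀ i θ s a, 0 < πi i θ s a)
    (hsum : ∀ i θ s, ∑ a, πi i θ s a = 1)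
    (hdiff : ∀ i s a, Differentiable ℝ (fun θ => πi i θ s a))
    (r : Fin m → S → (∀ k, A k) → ℝ)
    (B : Fin n → Fin m → Bool)
    (hB : ∀ i j, B i j = false →
      ∀ s (a a' : ∀ k, A k), (∀ k, k ≠ i → a k = a' k) → r j s a = r j s a')
    (V : Fin m → S → ℝ) :
    ∀ θ : ℝ,
      ∑ s, μ s * ∑ a : ∀ k, A k, (∏ k, πi k θ s (a k)) *
          ∑ i, deriv (fun θ' => Real.log (πi i θ' s (a i))) θ *
            (∑ j ∈ Finset.univ.filter (fun j => B i j = true), (r j s a - V j s))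
        = deriv (fun θ' =>
            ∑ s, μ s * ∑ a : ∀ k, A k, (∏ k, πi k θ' s (a k)) * ∑ j, r j s a) θ := by
  classical
  intro θ
  -- derivative of each component policy
  set d : (i : Fin n) → S → A i → ℝ :=
    fun i s b => deriv (fun θ' => πi i θ' s b) θ with hddef
  have hder : ∀ i s b, HasDerivAt (fun θ' => πi i θ' s b) (d i s b) θ :=
    fun i s b => ((hdiff i s b) θ).hasDerivAt
  -- the derivatives sum to zero over actions
  have hdsum : ∀ i s, ∑ b, d i s b = 0 := by
    intro i s
    have h1 : HasDerivAt (fun θ' => ∑ b, πi i θ' s b) (∑ b, d i s b) θ :=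
      HasDerivAt.fun_sum (fun b _ => hder i s b)
    have h2 : (fun θ' => ∑ b, πi i θ' s b) = fun _ => (1 : ℝ) :=
      funext fun θ' => hsum i θ' s
    rw [h2] at h1
    exact h1.unique (hasDerivAt_const θ 1)
  -- derivative of the product policy
  have hprod : ∀ s (a : ∀ k, A k),
      HasDerivAt (fun θ' => ∏ k, πi k θ' s (a k))
        (∑ i, (∏ k ∈ Finset.univ.erase i, πi k θ s (a k)) * d i s (a i)) θ := by
    intro s a
    have := HasDerivAt.fun_finsetProd (u := Finset.univ)
      (f := fun k θ' => πi k θ' s (a k)) (f' := fun k => d k s (a k))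
      (fun k _ => hder k s (a k))
    simpa [smul_eq_mul] using this
  -- derivative of the RHS function
  have hRHS : HasDerivAt (fun θ' =>
        ∑ s, μ s * ∑ a : ∀ k, A k, (∏ k, πi k θ' s (a k)) * ∑ j, r j s a)
      (∑ s, μ s * ∑ a : ∀ k, A k,
        (∑ i, (∏ k ∈ Finset.univ.erase i, πi k θ s (a k)) * d i s (a i)) *
          ∑ j, r j s a) θ := by
    apply HasDerivAt.fun_sum
    intro s _
    exact HasDerivAt.const_mul _
      (HasDerivAt.fun_sum fun a _ => (hprod s a).mul_const _)
  rw [hRHS.deriv]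
  -- now prove equality of the two sums
  apply Finset.sum_congr rfl
  intro s _
  congr 1
  -- rewrite the log derivative
  have hlog : ∀ (i : Fin n) (b : A i),
      deriv (fun θ' => Real.log (πi i θ' s b)) θ = d i s b / πi i θ s b := by
    intro i b
    exact ((hder i s b).log (ne_of_gt (hpos i θ s b))).deriv
  -- per-action rearrangement
  have step1 : ∀ a : ∀ k, A k,
      (∏ k, πi k θ s (a k)) *
        ∑ i, deriv (fun θ' => Real.log (πi i θ' s (a i))) θ *
          (∑ j ∈ Finset.univ.filter (fun j => B i j = true), (r j s a - V j s))
      = ∑ i, (d i s (a i) * ∏ k ∈ Finset.univ.erase i, πi k θ s (a k)) *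
          (∑ j ∈ Finset.univ.filter (fun j => B i j = true), (r j s a - V j s)) := by
    intro a
    rw [Finset.mul_sum]
    apply Finset.sum_congr rfl
    intro i _
    rw [hlog i (a i)]
    rw [← Finset.mul_prod_erase Finset.univ (fun k => πi k θ s (a k)) (Finset.mem_univ i)]
    have hne : πi i θ s (a i) ≠ 0 := ne_of_gt (hpos i θ s (a i))
    field_simp
  calc ∑ a : ∀ k, A k, (∏ k, πi k θ s (a k)) *
          ∑ i, deriv (fun θ' => Real.log (πi i θ' s (a i))) θ *
            (∑ j ∈ Finset.univ.filter (fun j => B i j = true), (r j s a - V j s))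
      = ∑ a : ∀ k, A k, ∑ i,
          (d i s (a i) * ∏ k ∈ Finset.univ.erase i, πi k θ s (a k)) *
            (∑ j ∈ Finset.univ.filter (fun j => B i j = true), (r j s a - V j s)) :=
        Finset.sum_congr rfl (fun a _ => step1 a)
    _ = ∑ i, ∑ a : ∀ k, A k,
          (d i s (a i) * ∏ k ∈ Finset.univ.erase i, πi k θ s (a k)) *
            (∑ j ∈ Finset.univ.filter (fun j => B i j = true), (r j s a - V j s)) :=
        Finset.sum_comm
    _ = ∑ i, ∑ a : ∀ k, A k,
          (d i s (a i) * ∏ k ∈ Finset.univ.erase i, πi k θ s (a k)) *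
            ∑ j, r j s a := by
        apply Finset.sum_congr rfl
        intro i _
        rw [← sub_eq_zero, ← Finset.sum_sub_distrib]
        have : ∀ a : ∀ k, A k,
            (d i s (a i) * ∏ k ∈ Finset.univ.erase i, πi k θ s (a k)) *
              (∑ j ∈ Finset.univ.filter (fun j => B i j = true), (r j s a - V j s)) -
            (d i s (a i) * ∏ k ∈ Finset.univ.erase i, πi k θ s (a k)) *
              ∑ j, r j s a
            = (d i s (a i) * ∏ k ∈ Finset.univ.erase i, πi k θ s (a k)) *
              ((∑ j ∈ Finset.univ.filter (fun j => B i j = true), (r j s a - V j s)) -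
                ∑ j, r j s a) := fun a => by ring
        rw [Finset.sum_congr rfl (fun a _ => this a)]
        apply sum_prod_indep_zero i (d i s) (fun k b => πi k θ s b) (hdsum i s)
        intro a a' hagree
        have hr : ∀ j ∈ Finset.univ.filter (fun j => ¬ (B i j = true)),
            r j s a = r j s a' := by
          intro j hj
          have hbF : B i j = false := by
            simpa using (Finset.mem_filter.mp hj).2
          exact hB i j hbF s a a' hagree
        have hsplit : ∀ b : ∀ k, A k, ∑ j, r j s b =
            (∑ j ∈ Finset.univ.filter (fun j => B i j = true), r j s b) +
            ∑ j ∈ Finset.univ.filter (fun j => ¬ (B i j = true)), r j s b :=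
          fun b => (Finset.sum_filter_add_sum_filter_not _ _ _).symm
        have hrT : ∀ j ∈ Finset.univ.filter (fun j => B i j = true),
            V j s = V j s := fun _ _ => rfl
        rw [hsplit a, hsplit a', Finset.sum_sub_distrib, Finset.sum_sub_distrib,
          Finset.sum_congr rfl hr]
        ring
    _ = ∑ a : ∀ k, A k, ∑ i,
          (d i s (a i) * ∏ k ∈ Finset.univ.erase i, πi k θ s (a k)) *
            ∑ j, r j s a := Finset.sum_comm
    _ = ∑ a : ∀ k, A k,
          (∑ i, (∏ k ∈ Finset.univ.erase i, πi k θ s (a k)) * d i s (a i)) *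
            ∑ j, r j s a := by
        apply Finset.sum_congr rfl
        intro a _
        rw [Finset.sum_mul]
        apply Finset.sum_congr rfl
        intro i _
        ring
end

section
/- (Over-specified causal matrices preserve unbiasedness.) In the setting of the discrete one-step causal policy gradient — finite state type S with distribution μ, per-dimension parameterized policies π_i with product policy π, reward terms r : Fin m → S → (Π i, A i) → ℝ — suppose B : Fin n → Fin m → Bool is a correct causal matrix (B i j = false implies r j does not depend on action dimension i) and B' : Fin n → Fin m → Bool satisfies B i j = true → B' i j = true (B' has no false negatives relative to B). Then the causal policy gradient estimator built from B' is also unbiased: for every θ, ∑_s μ s · ∑_a π θ s a · ∑_{i} ((d/dθ) log (π_i θ s (a i))) · (∑_{j : B' i j = true} r j s a) = (d/dθ) (∑_s μ s · ∑_a π θ s a · ∑_{j} r j s a). -/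
/-- Over-specified causal matrices (no false negatives relative to a correct
causal matrix) preserve unbiasedness of the causal policy gradient. -/
theorem overspecified_causal_matrix_unbiased {n m : ℕ} {S : Type*}
    [Fintype S] [Nonempty S]
    {A : Fin n → Type*} [∀ i, Fintype (A i)] [∀ i, Nonempty (A i)]
    (μ : S → ℝ)
    (hμ : ∀ s, 0 ≤ μ s)
    (hμsum : ∑ s, μ s = 1)
    (πi : (i : Fin n) → ℝ → S → A i → ℝ)
    (hpos : ∀ i θ s a, 0 < πi i θ s a)
    (hsum : ∀ i θ s, ∑ a, πi i θ s a = 1)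
    (hdiff : ∀ i s a, Differentiable ℝ (fun θ => πi i θ s a))
    (r : Fin m → S → (∀ k, A k) → ℝ)
    (B B' : Fin n → Fin m → Bool)
    (hB : ∀ i j, B i j = false →
      ∀ s (a a' : ∀ k, A k), (∀ k, k ≠ i → a k = a' k) → r j s a = r j s a')
    (hB' : ∀ i j, B i j = true → B' i j = true) :
    ∀ θ : ℝ,
      ∑ s, μ s * ∑ a : ∀ k, A k, (∏ k, πi k θ s (a k)) *
          ∑ i, deriv (fun θ' => Real.log (πi i θ' s (a i))) θ *
            (∑ j ∈ Finset.univ.filter (fun j => B' i j = true), r j s a)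
        = deriv (fun θ' =>
            ∑ s, μ s * ∑ a : ∀ k, A k, (∏ k, πi k θ' s (a k)) * ∑ j, r j s a) θ := by
  intro θ
  -- sum of derivatives of each coordinate policy is zero
  have hD0 : ∀ (i : Fin n) (s : S),
      ∑ x : A i, deriv (fun θ' => πi i θ' s x) θ = 0 := by
    intro i s
    have h1 : HasDerivAt (fun θ' => ∑ x : A i, πi i θ' s x)
        (∑ x : A i, deriv (fun θ' => πi i θ' s x) θ) θ :=
      HasDerivAt.fun_sum fun x _ => ((hdiff i s x) θ).hasDerivAt
    have h2 : (fun θ' => ∑ x : A i, πi i θ' s x) = fun _ => (1 : ℝ) :=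
      funext fun θ' => hsum i θ' s
    rw [h2] at h1
    exact h1.unique (hasDerivAt_const θ 1)
  -- derivative of the product policy
  have hP : ∀ (s : S) (a : ∀ k, A k),
      HasDerivAt (fun θ' => ∏ k, πi k θ' s (a k))
        (∑ i, (∏ k ∈ Finset.univ.erase i, πi k θ s (a k)) *
          deriv (fun θ' => πi i θ' s (a i)) θ) θ := by
    intro s a
    have := HasDerivAt.fun_finsetProd (u := Finset.univ)
      (f := fun k θ' => πi k θ' s (a k))
      (f' := fun k => deriv (fun θ' => πi k θ' s (a k)) θ) (x := θ)
      (fun k _ => ((hdiff k s (a k)) θ).hasDerivAt)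
    simpa [smul_eq_mul] using this
  -- derivative of log
  have hlog : ∀ (i : Fin n) (s : S) (x : A i),
      deriv (fun θ' => Real.log (πi i θ' s x)) θ
        = deriv (fun θ' => πi i θ' s x) θ / πi i θ s x :=
    fun i s x => (((hdiff i s x) θ).hasDerivAt.log (hpos i θ s x).ne').deriv
  -- the key zero lemma: score of coordinate i against an i-independent function
  have hzero : ∀ (i : Fin n) (s : S) (g : (∀ k, A k) → ℝ),
      (∀ a a' : ∀ k, A k, (∀ k, k ≠ i → a k = a' k) → g a = g a') →
      ∑ a : ∀ k, A k, (∏ k ∈ Finset.univ.erase i, πi k θ s (a k)) *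
        deriv (fun θ' => πi i θ' s (a i)) θ * g a = 0 := by
    intro i s g hg
    set e := Equiv.piSplitAt i A with he
    rw [← Equiv.sum_comp e.symm, Fintype.sum_prod_type]
    have hco : ∀ (x : A i) (y : ∀ k : {k // k ≠ i}, A k), (e.symm (x, y)) i = x := by
      intro x y; simp [he]
    have hco2 : ∀ (x : A i) (y : ∀ k : {k // k ≠ i}, A k) (k : Fin n) (h : k ≠ i),
        (e.symm (x, y)) k = y ⟨k, h⟩ := by
      intro x y k h; simp [he, h]
    have x₀ : A i := Classical.arbitrary (A i)
    have hstep : ∀ (x : A i) (y : ∀ k : {k // k ≠ i}, A k),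
        (∏ k ∈ Finset.univ.erase i, πi k θ s ((e.symm (x, y)) k)) *
          deriv (fun θ' => πi i θ' s ((e.symm (x, y)) i)) θ * g (e.symm (x, y))
        = deriv (fun θ' => πi i θ' s x) θ *
          ((∏ k ∈ Finset.univ.erase i, πi k θ s ((e.symm (x₀, y)) k)) *
            g (e.symm (x₀, y))) := by
      intro x y
      have h1 : ∏ k ∈ Finset.univ.erase i, πi k θ s ((e.symm (x, y)) k)
          = ∏ k ∈ Finset.univ.erase i, πi k θ s ((e.symm (x₀, y)) k) :=
        Finset.prod_congr rfl fun k hk => by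
          have hki : k ≠ i := Finset.ne_of_mem_erase hk
          rw [hco2 x y k hki, hco2 x₀ y k hki]
      have h2 : g (e.symm (x, y)) = g (e.symm (x₀, y)) :=
        hg _ _ fun k hk => by rw [hco2 x y k hk, hco2 x₀ y k hk]
      rw [h1, h2, hco x y]; ring
    calc ∑ x : A i, ∑ y : ∀ k : {k // k ≠ i}, A k,
          (∏ k ∈ Finset.univ.erase i, πi k θ s ((e.symm (x, y)) k)) *
            deriv (fun θ' => πi i θ' s ((e.symm (x, y)) i)) θ * g (e.symm (x, y))
        = ∑ x : A i, deriv (fun θ' => πi i θ' s x) θ *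
            ∑ y : ∀ k : {k // k ≠ i}, A k,
              (∏ k ∈ Finset.univ.erase i, πi k θ s ((e.symm (x₀, y)) k)) *
                g (e.symm (x₀, y)) := by
          refine Finset.sum_congr rfl fun x _ => ?_
          rw [Finset.mul_sum]
          exact Finset.sum_congr rfl fun y _ => hstep x y
      _ = 0 := by rw [← Finset.sum_mul, hD0 i s, zero_mul]
  -- the right-hand side as an explicit derivative
  have hRHS : HasDerivAt (fun θ' =>
      ∑ s, μ s * ∑ a : ∀ k, A k, (∏ k, πi k θ' s (a k)) * ∑ j, r j s a)
      (∑ s, μ s * ∑ a : ∀ k, A k,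
        (∑ i, (∏ k ∈ Finset.univ.erase i, πi k θ s (a k)) *
          deriv (fun θ' => πi i θ' s (a i)) θ) * ∑ j, r j s a) θ :=
    HasDerivAt.fun_sum fun s _ =>
      (HasDerivAt.fun_sum fun a _ => (hP s a).mul_const _).const_mul (μ s)
  rw [hRHS.deriv]
  refine Finset.sum_congr rfl fun s _ => ?_
  congr 1
  -- rewrite the log-derivative terms
  have hterm : ∀ (a : ∀ k, A k),
      (∏ k, πi k θ s (a k)) *
        ∑ i, deriv (fun θ' => Real.log (πi i θ' s (a i))) θ *
          (∑ j ∈ Finset.univ.filter (fun j => B' i j = true), r j s a)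
      = ∑ i, (∏ k ∈ Finset.univ.erase i, πi k θ s (a k)) *
          deriv (fun θ' => πi i θ' s (a i)) θ *
          (∑ j ∈ Finset.univ.filter (fun j => B' i j = true), r j s a) := by
    intro a
    rw [Finset.mul_sum]
    refine Finset.sum_congr rfl fun i _ => ?_
    rw [hlog, ← Finset.mul_prod_erase _ _ (Finset.mem_univ i)]
    have hne : πi i θ s (a i) ≠ 0 := (hpos i θ s (a i)).ne'
    field_simp
  calc ∑ a : ∀ k, A k, (∏ k, πi k θ s (a k)) *
        ∑ i, deriv (fun θ' => Real.log (πi i θ' s (a i))) θ *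
          (∑ j ∈ Finset.univ.filter (fun j => B' i j = true), r j s a)
      = ∑ i, ∑ a : ∀ k, A k,
          (∏ k ∈ Finset.univ.erase i, πi k θ s (a k)) *
            deriv (fun θ' => πi i θ' s (a i)) θ *
            (∑ j ∈ Finset.univ.filter (fun j => B' i j = true), r j s a) := by
        rw [← Finset.sum_comm]
        exact Finset.sum_congr rfl fun a _ => hterm a
    _ = ∑ i, ∑ a : ∀ k, A k,
          (∏ k ∈ Finset.univ.erase i, πi k θ s (a k)) *
            deriv (fun θ' => πi i θ' s (a i)) θ * (∑ j, r j s a) := by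
        refine Finset.sum_congr rfl fun i _ => ?_
        have hsplit : ∀ a : ∀ k, A k,
            (∑ j, r j s a)
            = (∑ j ∈ Finset.univ.filter (fun j => B' i j = true), r j s a)
              + ∑ j ∈ Finset.univ.filter (fun j => ¬ (B' i j = true)), r j s a :=
          fun a => (Finset.sum_filter_add_sum_filter_not _ _ _).symm
        have hrest : ∑ a : ∀ k, A k,
            (∏ k ∈ Finset.univ.erase i, πi k θ s (a k)) *
              deriv (fun θ' => πi i θ' s (a i)) θ *
              (∑ j ∈ Finset.univ.filter (fun j => ¬ (B' i j = true)), r j s a) = 0 := by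
          simp_rw [Finset.mul_sum]
          rw [Finset.sum_comm]
          refine Finset.sum_eq_zero fun j hj => ?_
          have hjB' : ¬ (B' i j = true) := (Finset.mem_filter.mp hj).2
          have hjB : B i j = false := by
            by_contra h
            exact hjB' (hB' i j (Bool.eq_false_iff.not_left.mp h))
          exact hzero i s (fun a => r j s a) (fun a a' h => hB i j hjB s a a' h)
        simp_rw [hsplit, mul_add, Finset.sum_add_distrib, hrest, add_zero]
    _ = ∑ a : ∀ k, A k,
          (∑ i, (∏ k ∈ Finset.univ.erase i, πi k θ s (a k)) *
            deriv (fun θ' => πi i θ' s (a i)) θ) * (∑ j, r j s a) := by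
        rw [Finset.sum_comm]
        exact Finset.sum_congr rfl fun a _ => by rw [Finset.sum_mul]
end
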